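/- Let N ≥ 1, n ≥ 1, and let A = (1, 3, 3², …, 3^{N−1}) in ℤ. If there exists an n-coloring of the edges of the complete graph on vertex set {1, …, N+1} with no monochromatic triangle, then the set Â of block sums of A can be covered by n sumfree subsets of ℤ (i.e. sd(Â) ≤ n), even though A is not linearly independent over ℤ. -/

import Mathlib

/-- A subset `S` of an abelian group is sumfree if there are no `x, y, z ∈ S`
with `x + y = z` (here `x = y` is allowed). -/
def Sumfree {G : Type*} [AddCommGroup G] (S : Set G) : Prop :=
  ∀ x ∈ S, ∀ y ∈ S, x + y ∉ S

/-- `B` is a block of `A`: a nonempty consecutive subsequence. -/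
def IsBlock {G : Type*} (B A : List G) : Prop :=
  B ≠ [] ∧ ∃ L R : List G, A = L ++ B ++ R

/-- The set of block sums of the finite sequence `A`. -/
def blockSums {G : Type*} [AddCommGroup G] (A : List G) : Set G :=
  {s | ∃ B : List G, IsBlock B A ∧ B.sum = s}

/-- `X` can be covered by `n` sumfree subsets. -/
def CoveredBySumfree {G : Type*} [AddCommGroup G] (n : ℕ) (X : Set G) : Prop :=
  ∃ C : Fin n → Set G, (∀ i, Sumfree (C i)) ∧ X ⊆ ⋃ i, C i

/- ### Auxiliary lemmas -/

lemma sum_take_aux (N k : ℕ) (hk : k ≤ N) :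
    2 * ((List.ofFn fun t : Fin N => (3:ℤ)^(t:ℕ)).take k).sum = 3^k - 1 := by
  induction k with
  | zero => simp
  | succ k ih =>
    have hk' : k ≤ N := by omega
    rw [List.take_succ]
    simp only [List.sum_append, List.getElem?_ofFn, List.ofFnNthVal]
    rw [dif_pos (by omega : k < N)]
    simp only [Option.toList_some, List.sum_cons, List.sum_nil, add_zero]
    have := ih hk'
    have h3 : (3:ℤ)^(k+1) = 3^k * 3 := pow_succ 3 k
    linarith

lemma two_pow_eq_aux (a : ℕ) : ∀ b d e : ℕ, a ≤ b → d ≤ e →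
    3^a + 3^b = 3^d + 3^e → a = d ∧ b = e := by
  induction a with
  | zero =>
    intro b d e hab hde h
    rcases Nat.eq_zero_or_pos d with hd | hd
    · subst hd
      have hbe : (3:ℕ)^b = 3^e := by simp only [pow_zero] at h; omega
      exact ⟨rfl, Nat.pow_right_injective (by norm_num) hbe⟩
    · exfalso
      have h1 : 3 ∣ 3^d := dvd_pow_self 3 (by omega)
      have h2 : 3 ∣ 3^e := dvd_pow_self 3 (by omega)
      rcases Nat.eq_zero_or_pos b with hb | hb
      · subst hb; simp at h; omega
      · have h3 : 3 ∣ 3^b := dvd_pow_self 3 (by omega)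
        simp only [pow_zero] at h; omega
  | succ a ih =>
    intro b d e hab hde h
    rcases Nat.eq_zero_or_pos d with hd | hd
    · exfalso
      subst hd
      have h1 : 3 ∣ 3^(a+1) := dvd_pow_self 3 (by omega)
      have h2 : 3 ∣ 3^b := dvd_pow_self 3 (by omega)
      rcases Nat.eq_zero_or_pos e with he | he
      · subst he; simp only [pow_zero] at h; omega
      · have h3 : 3 ∣ 3^e := dvd_pow_self 3 (by omega)
        simp only [pow_zero] at h; omega
    · obtain ⟨b', rfl⟩ : ∃ b', b = b' + 1 := ⟨b - 1, by omega⟩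
      obtain ⟨d', rfl⟩ : ∃ d', d = d' + 1 := ⟨d - 1, by omega⟩
      obtain ⟨e', rfl⟩ : ∃ e', e = e' + 1 := ⟨e - 1, by omega⟩
      simp only [pow_succ] at h
      have := ih b' d' e' (by omega) (by omega) (by omega)
      omega

lemma three_pow_eq_aux (a : ℕ) : ∀ b c d e f : ℕ, a ≤ b → b ≤ c → d ≤ e → e ≤ f →
    3^a + 3^b + 3^c = 3^d + 3^e + 3^f → a = d ∧ b = e ∧ c = f := by
  induction a with
  | zero =>
    intro b c d e f hab hbc hde hef h
    rcases Nat.eq_zero_or_pos d with hd | hd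
    · subst hd
      obtain ⟨h1, h2⟩ := two_pow_eq_aux b c e f hbc hef (by simp only [pow_zero] at h; omega)
      exact ⟨rfl, h1, h2⟩
    · exfalso
      have h1 : 3 ∣ 3^d := dvd_pow_self 3 (by omega)
      have h2 : 3 ∣ 3^e := dvd_pow_self 3 (by omega)
      have h3 : 3 ∣ 3^f := dvd_pow_self 3 (by omega)
      have p1 : 3 ≤ 3^d := by calc 3 = 3^1 := (pow_one 3).symm
                                _ ≤ 3^d := Nat.pow_le_pow_right (by norm_num) (by omega)
      rcases Nat.eq_zero_or_pos b with hb | hb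
      · rcases Nat.eq_zero_or_pos c with hc | hc
        · subst hb; subst hc
          have p2 : 3 ≤ 3^e := by calc 3 = 3^1 := (pow_one 3).symm
                                    _ ≤ 3^e := Nat.pow_le_pow_right (by norm_num) (by omega)
          have p3 : 3 ≤ 3^f := by calc 3 = 3^1 := (pow_one 3).symm
                                    _ ≤ 3^f := Nat.pow_le_pow_right (by norm_num) (by omega)
          simp only [pow_zero] at h; omega
        · subst hb
          have h4 : 3 ∣ 3^c := dvd_pow_self 3 (by omega)
          simp only [pow_zero] at h; omega
      · have h4 : 3 ∣ 3^b := dvd_pow_self 3 (by omega)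
        have h5 : 3 ∣ 3^c := dvd_pow_self 3 (by omega)
        simp only [pow_zero] at h; omega
  | succ a ih =>
    intro b c d e f hab hbc hde hef h
    rcases Nat.eq_zero_or_pos d with hd | hd
    · exfalso
      subst hd
      have h1 : 3 ∣ 3^(a+1) := dvd_pow_self 3 (by omega)
      have h2 : 3 ∣ 3^b := dvd_pow_self 3 (by omega)
      have h3 : 3 ∣ 3^c := dvd_pow_self 3 (by omega)
      have p1 : 3 ≤ 3^(a+1) := by calc 3 = 3^1 := (pow_one 3).symm
                                    _ ≤ 3^(a+1) := Nat.pow_le_pow_right (by norm_num) (by omega)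
      have p2 : 3 ≤ 3^b := by calc 3 = 3^1 := (pow_one 3).symm
                                _ ≤ 3^b := Nat.pow_le_pow_right (by norm_num) (by omega)
      have p3 : 3 ≤ 3^c := by calc 3 = 3^1 := (pow_one 3).symm
                                _ ≤ 3^c := Nat.pow_le_pow_right (by norm_num) (by omega)
      rcases Nat.eq_zero_or_pos e with he | he
      · rcases Nat.eq_zero_or_pos f with hf | hf
        · subst he; subst hf; simp only [pow_zero] at h; omega
        · subst he
          have h4 : 3 ∣ 3^f := dvd_pow_self 3 (by omega)
          simp only [pow_zero] at h; omega
      · have h4 : 3 ∣ 3^e := dvd_pow_self 3 (by omega)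
        have h5 : 3 ∣ 3^f := dvd_pow_self 3 (by omega)
        simp only [pow_zero] at h; omega
    · obtain ⟨b', rfl⟩ : ∃ b', b = b' + 1 := ⟨b - 1, by omega⟩
      obtain ⟨c', rfl⟩ : ∃ c', c = c' + 1 := ⟨c - 1, by omega⟩
      obtain ⟨d', rfl⟩ : ∃ d', d = d' + 1 := ⟨d - 1, by omega⟩
      obtain ⟨e', rfl⟩ : ∃ e', e = e' + 1 := ⟨e - 1, by omega⟩
      obtain ⟨f', rfl⟩ : ∃ f', f = f' + 1 := ⟨f - 1, by omega⟩
      simp only [pow_succ] at h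
      have := ih b' c' d' e' f' (by omega) (by omega) (by omega) (by omega) (by omega)
      omega

lemma sort3_aux (a b c : ℕ) : ∃ a' b' c' : ℕ, a' ≤ b' ∧ b' ≤ c' ∧
    ({a, b, c} : Multiset ℕ) = {a', b', c'} := by
  have swap12 : ∀ x y z : ℕ, ({x, y, z} : Multiset ℕ) = {y, x, z} := fun x y z =>
    Multiset.cons_swap x y {z}
  have swap23 : ∀ x y z : ℕ, ({x, y, z} : Multiset ℕ) = {x, z, y} := fun x y z =>
    congrArg (x ::ₘ ·) (Multiset.cons_swap y z 0)
  rcases le_total a b with h1 | h1 <;> rcases le_total b c with h2 | h2 <;>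
    rcases le_total a c with h3 | h3
  · exact ⟨a, b, c, h1, h2, rfl⟩
  · exact ⟨a, b, c, h1, h2, rfl⟩
  · exact ⟨a, c, b, h3, h2, swap23 a b c⟩
  · exact ⟨c, a, b, h3, h1, (swap23 a b c).trans (swap12 a c b)⟩
  · exact ⟨b, a, c, h1, h3, swap12 a b c⟩
  · exact ⟨b, c, a, h2, h3, (swap12 a b c).trans (swap23 b a c)⟩
  · exact ⟨c, b, a, h2, h1, ((swap12 a b c).trans (swap23 b a c)).trans (swap12 b c a)⟩
  · exact ⟨c, b, a, h2, h1, ((swap12 a b c).trans (swap23 b a c)).trans (swap12 b c a)⟩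

lemma multiset_pow_sum_aux (a b c : ℕ) :
    ((({a, b, c} : Multiset ℕ)).map (fun t => 3 ^ t)).sum = 3 ^ a + 3 ^ b + 3 ^ c := by
  simp [add_assoc]

lemma three_pow_multiset_aux (a b c d e f : ℕ) (h : 3^a+3^b+3^c = 3^d+3^e+3^f) :
    ({a, b, c} : Multiset ℕ) = {d, e, f} := by
  obtain ⟨a', b', c', h1, h2, e1⟩ := sort3_aux a b c
  obtain ⟨d', e', f', h3, h4, e2⟩ := sort3_aux d e f
  have s1 : 3^a + 3^b + 3^c = 3^a' + 3^b' + 3^c' := by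
    have := congrArg (fun m : Multiset ℕ => (m.map (fun t => 3^t)).sum) e1
    simp only [multiset_pow_sum_aux] at this; omega
  have s2 : 3^d + 3^e + 3^f = 3^d' + 3^e' + 3^f' := by
    have := congrArg (fun m : Multiset ℕ => (m.map (fun t => 3^t)).sum) e2
    simp only [multiset_pow_sum_aux] at this; omega
  obtain ⟨rfl, rfl, rfl⟩ := three_pow_eq_aux a' b' c' d' e' f' h1 h2 h3 h4 (by omega)
  rw [e1, e2]

lemma key_nat_aux (i j k l p q : ℕ) (hij : i < j) (hkl : k < l) (hpq : p < q)
    (h : 3^j + 3^l + 3^p = 3^q + 3^i + 3^k) :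
    (q = j ∧ l = i ∧ p = k) ∨ (q = l ∧ j = k ∧ p = i) := by
  have hm : ({j, l, p} : Multiset ℕ) = {q, i, k} := three_pow_multiset_aux _ _ _ _ _ _ h
  simp only [Multiset.insert_eq_cons] at hm
  rw [Multiset.cons_eq_cons] at hm
  rcases hm with ⟨hjq, hm⟩ | ⟨hjq, cs, hcs1, hcs2⟩
  · rw [Multiset.cons_eq_cons] at hm
    rcases hm with ⟨hli, hm⟩ | ⟨hli, ds, hd1, hd2⟩
    · exact Or.inl ⟨hjq.symm, hli, Multiset.singleton_inj.mp hm⟩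
    · obtain ⟨hkl', -⟩ := (Multiset.singleton_eq_cons_iff _).mp hd2
      omega
  · rw [Multiset.cons_eq_cons] at hcs1
    rcases hcs1 with ⟨hlq, hcs⟩ | ⟨hlq, ds, hd1, hd2⟩
    · subst hcs
      rw [Multiset.cons_eq_cons] at hcs2
      rcases hcs2 with ⟨hij', -⟩ | ⟨-, es, he1, he2⟩
      · omega
      · obtain ⟨hkj, rfl⟩ := (Multiset.singleton_eq_cons_iff _).mp he1
        obtain ⟨hpi, -⟩ := (Multiset.singleton_eq_cons_iff _).mp he2
        exact Or.inr ⟨hlq.symm, hkj.symm, hpi⟩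
    · obtain ⟨hpq', -⟩ := (Multiset.singleton_eq_cons_iff _).mp hd1
      omega

lemma key_int_aux (i j k l p q : ℕ) (hij : i < j) (hkl : k < l) (hpq : p < q)
    (h : (3:ℤ)^j - 3^i + (3^l - 3^k) = 3^q - 3^p) :
    (q = j ∧ l = i ∧ p = k) ∨ (q = l ∧ j = k ∧ p = i) := by
  apply key_nat_aux i j k l p q hij hkl hpq
  have hc : ((3^j + 3^l + 3^p : ℕ) : ℤ) = ((3^q + 3^i + 3^k : ℕ) : ℤ) := by
    push_cast; linarith
  exact_mod_cast hc

/-- For `A = (1, 3, 3², …, 3^{N-1})` in `ℤ`: if there is an `n`-coloring of the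
edges of the complete graph on `{1, …, N+1}` with no monochromatic triangle,
then `Â` can be covered by `n` sumfree subsets of `ℤ` (even though `A` is not
linearly independent over `ℤ`). -/
theorem coveredBySumfree_powers_of_three (N n : ℕ) (hN : 1 ≤ N) (hn : 1 ≤ n)
    (hχ : ∃ χ : ℕ → ℕ → Fin n, ∀ i j k : ℕ,
      1 ≤ i → i < j → j < k → k ≤ N + 1 → ¬(χ i j = χ j k ∧ χ i j = χ i k)) :
    CoveredBySumfree n (blockSums (List.ofFn fun k : Fin N => (3 : ℤ) ^ (k : ℕ))) := by
  obtain ⟨χ, hχ⟩ := hχ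
  refine ⟨fun c => {s : ℤ | ∃ i j : ℕ, i < j ∧ j ≤ N ∧ 2*s = 3^j - 3^i ∧ χ (i+1) (j+1) = c},
    ?_, ?_⟩
  · intro c x hx y hy hxy
    obtain ⟨i, j, hij, hjN, hx2, hcx⟩ := hx
    obtain ⟨k, l, hkl, hlN, hy2, hcy⟩ := hy
    obtain ⟨p, q, hpq, hqN, hz2, hcz⟩ := hxy
    have heq : (3:ℤ)^j - 3^i + (3^l - 3^k) = 3^q - 3^p := by linarith
    rcases key_int_aux i j k l p q hij hkl hpq heq with ⟨h1, h2, h3⟩ | ⟨h1, h2, h3⟩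
    · have e1 : χ (k+1) (i+1) = c := by rw [← h2]; exact hcy
      have e2 : χ (k+1) (j+1) = c := by rw [← h1, ← h3]; exact hcz
      exact hχ (k+1) (i+1) (j+1) (by omega) (by omega) (by omega) (by omega)
        ⟨e1.trans hcx.symm, e1.trans e2.symm⟩
    · have e1 : χ (j+1) (l+1) = c := by rw [h2]; exact hcy
      have e2 : χ (i+1) (l+1) = c := by rw [← h1, ← h3]; exact hcz
      exact hχ (i+1) (j+1) (l+1) (by omega) (by omega) (by omega) (by omega)
        ⟨hcx.trans e1.symm, hcx.trans e2.symm⟩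
  · rintro x ⟨B, ⟨hBne, L, R, hsplit⟩, rfl⟩
    have hlen : N = L.length + B.length + R.length := by
      have := congrArg List.length hsplit
      simp [List.length_ofFn, List.length_append] at this
      omega
    have hm : 0 < B.length := List.length_pos_iff.mpr hBne
    have h1 : 2 * L.sum = 3^(L.length) - 1 := by
      have ht : (List.ofFn fun k : Fin N => (3 : ℤ) ^ (k : ℕ)).take L.length = L := by
        rw [hsplit, List.append_assoc]; exact List.take_left (l₁ := L) (l₂ := B ++ R)
      have := sum_take_aux N L.length (by omega)
      rw [ht] at this; exact this
    have h2 : 2 * (L.sum + B.sum) = 3^(L.length + B.length) - 1 := by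
      have ht : (List.ofFn fun k : Fin N => (3 : ℤ) ^ (k : ℕ)).take (L.length + B.length)
          = L ++ B := by
        rw [hsplit]
        have := List.take_left (l₁ := L ++ B) (l₂ := R)
        simpa [List.length_append] using this
      have := sum_take_aux N (L.length + B.length) (by omega)
      rw [ht] at this
      simpa [List.sum_append] using this
    refine Set.mem_iUnion.mpr ⟨χ (L.length+1) (L.length+B.length+1),
      L.length, L.length + B.length, by omega, by omega, by linarith, rfl⟩
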